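/- arXiv:2011.05044 — 4 statements merged into one kernel-verified Lean document; each statement's English description precedes it below -/
import Mathlib

section
/- If M is a smooth real hypersurface in ℂⁿ admitting some holomorphic coordinate system at p in which the Newton polyhedron of a defining function equals {ξ ∈ ℝ₊ⁿ : ξ_n ≥ 1}, then the Bloom–Graham type of M at p is infinite, i.e., there exist complex submanifolds of codimension one tangent to M at p to arbitrarily high order. -/
open Topology Asymptotics Filter

/-- The Newton polyhedron associated to a set `S ⊆ ℤ₊ⁿ⁺¹` of exponents. -/
def NewtonPolyhedron {n : ℕ} (S : Set (Fin n → ℕ)) : Set (Fin n → ℝ) :=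
  convexHull ℝ (⋃ γ ∈ S, {ξ : Fin n → ℝ | ∀ j, (γ j : ℝ) ≤ ξ j})

/-- The Bloom–Graham type of the hypersurface `{r = 0} ⊆ ℂⁿ⁺¹` at `p` is infinite:
for every `m` there is an `n`-dimensional complex submanifold through `p`
(parametrized by a holomorphic immersion `φ`) tangent to `{r = 0}` to order `m`. -/
def BloomGrahamTypeInfinite {n : ℕ} (r : (Fin (n + 1) → ℂ) → ℝ) (p : Fin (n + 1) → ℂ) : Prop :=
  ∀ m : ℕ, ∃ φ : (Fin n → ℂ) → (Fin (n + 1) → ℂ), AnalyticAt ℂ φ 0 ∧ φ 0 = p ∧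
    Function.Injective (fderiv ℂ φ 0) ∧
    (fun z => r (φ z)) =O[𝓝 0] fun z : Fin n → ℂ => ‖z‖ ^ m

noncomputable def iotaL (n : ℕ) : (Fin n → ℂ) →L[ℂ] (Fin (n + 1) → ℂ) :=
  ContinuousLinearMap.pi (fun i =>
    Fin.lastCases 0 (fun j => ContinuousLinearMap.proj j) i)

lemma iotaL_castSucc {n : ℕ} (z : Fin n → ℂ) (j : Fin n) :
    iotaL n z j.castSucc = z j := by
  simp [iotaL, Fin.lastCases_castSucc]

lemma iotaL_last {n : ℕ} (z : Fin n → ℂ) : iotaL n z (Fin.last n) = 0 := by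
  simp [iotaL]

lemma iotaL_norm_le {n : ℕ} (z : Fin n → ℂ) : ‖iotaL n z‖ ≤ ‖z‖ := by
  refine (pi_norm_le_iff_of_nonneg (norm_nonneg z)).2 fun i => ?_
  induction i using Fin.lastCases with
  | last => simp [iotaL_last]
  | cast j => rw [iotaL_castSucc]; exact norm_le_pi_norm z j

lemma iotaL_injective {n : ℕ} : Function.Injective (iotaL n) := by
  intro x y h
  funext j
  have := congrFun h j.castSucc
  simpa [iotaL_castSucc] using this

/-- If a smooth real hypersurface `M = {r = 0} ⊆ ℂⁿ⁺¹` admits a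
holomorphic coordinate system at `p` (a local biholomorphism `Φ` with `Φ 0 = p`) in which
the Newton polyhedron of the defining function `r ∘ Φ` equals
`{ξ ∈ ℝ₊ⁿ⁺¹ : ξ_last ≥ 1}`, then the Bloom–Graham type of `M` at `p` is infinite. -/
theorem statement2 {n : ℕ} (r : (Fin (n + 1) → ℂ) → ℝ) (p : Fin (n + 1) → ℂ)
    (hr : ContDiff ℝ (⊤ : ℕ∞) r) (hrp : r p = 0) (hgrad : fderiv ℝ r p ≠ 0)
    (hcoord : ∃ Φ : (Fin (n + 1) → ℂ) → (Fin (n + 1) → ℂ),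
      AnalyticAt ℂ Φ 0 ∧ Φ 0 = p ∧ Function.Bijective (fderiv ℂ Φ 0) ∧
      ∃ c : (Fin (n + 1) → ℕ) → (Fin (n + 1) → ℕ) → ℂ,
        (∀ N : ℕ,
          (fun z : Fin (n + 1) → ℂ => ((r (Φ z) : ℝ) : ℂ) -
            ∑ α ∈ Finset.Iic ((fun _ => N) : Fin (n + 1) → ℕ),
              ∑ β ∈ Finset.Iic ((fun _ => N) : Fin (n + 1) → ℕ),
                if (∑ j, (α j + β j)) < N then
                  c α β * (∏ j, z j ^ α j) * ∏ j, (starRingEnd ℂ) (z j) ^ β j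
                else 0)
            =O[𝓝 0] fun z => ‖z‖ ^ N) ∧
        NewtonPolyhedron {γ | ∃ α β, c α β ≠ 0 ∧ γ = α + β} =
          {ξ : Fin (n + 1) → ℝ | (∀ j, 0 ≤ ξ j) ∧ 1 ≤ ξ (Fin.last n)}) :
    BloomGrahamTypeInfinite r p := by
  obtain ⟨Φ, hΦa, hΦ0, hΦbij, c, hO, hNP⟩ := hcoord
  -- every nonzero coefficient has last exponent ≥ 1
  have hlast : ∀ α β : Fin (n + 1) → ℕ, c α β ≠ 0 →
      1 ≤ α (Fin.last n) + β (Fin.last n) := by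
    intro α β hc
    have hγS : (α + β) ∈ {γ | ∃ α β, c α β ≠ 0 ∧ γ = α + β} := ⟨α, β, hc, rfl⟩
    have hmem : (fun j => ((α + β) j : ℝ)) ∈
        NewtonPolyhedron {γ | ∃ α β, c α β ≠ 0 ∧ γ = α + β} := by
      apply subset_convexHull ℝ _
      exact Set.mem_biUnion hγS (fun j => le_refl _)
    rw [hNP] at hmem
    have h1 : (1 : ℝ) ≤ ((α + β) (Fin.last n) : ℝ) := hmem.2
    have : (1 : ℕ) ≤ (α + β) (Fin.last n) := by exact_mod_cast h1
    simpa [Pi.add_apply] using this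
  intro m
  refine ⟨fun z => Φ (iotaL n z), ?_, ?_, ?_, ?_⟩
  · have hΦa' : AnalyticAt ℂ Φ ((iotaL n) 0) := by rw [map_zero]; exact hΦa
    exact hΦa'.comp ((iotaL n).analyticAt 0)
  · simp [hΦ0]
  · have hder : fderiv ℂ (fun z => Φ (iotaL n z)) 0 =
        (fderiv ℂ Φ 0).comp (iotaL n) := by
      have h1 : fderiv ℂ (Φ ∘ iotaL n) 0 =
          (fderiv ℂ Φ (iotaL n 0)).comp (fderiv ℂ (iotaL n) 0) := by
        apply fderiv_comp
        · exact (by simpa using hΦa : AnalyticAt ℂ Φ (iotaL n 0)).differentiableAt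
        · exact (iotaL n).differentiableAt
      simpa [(iotaL n).fderiv, Function.comp_def] using h1
    rw [hder, ContinuousLinearMap.coe_comp']
    exact Function.Injective.comp hΦbij.1 iotaL_injective
  · have hsum0 : ∀ z : Fin n → ℂ,
        (∑ α ∈ Finset.Iic ((fun _ => m) : Fin (n + 1) → ℕ),
          ∑ β ∈ Finset.Iic ((fun _ => m) : Fin (n + 1) → ℕ),
            if (∑ j, (α j + β j)) < m then
              c α β * (∏ j, iotaL n z j ^ α j) *
                ∏ j, (starRingEnd ℂ) (iotaL n z j) ^ β j
            else 0) = 0 := by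
      intro z
      refine Finset.sum_eq_zero fun α _ => Finset.sum_eq_zero fun β _ => ?_
      split
      · by_cases hc : c α β = 0
        · simp [hc]
        · rcases Nat.one_le_iff_ne_zero.1 (hlast α β hc) |> fun h => h with h
          have := hlast α β hc
          rcases Nat.lt_or_ge (α (Fin.last n)) 1 with h1 | h1
          · have hβ : 1 ≤ β (Fin.last n) := by omega
            have : (∏ j, (starRingEnd ℂ) (iotaL n z j) ^ β j) = 0 := by
              apply Finset.prod_eq_zero (Finset.mem_univ (Fin.last n))
              rw [iotaL_last]
              simp [zero_pow (by omega : β (Fin.last n) ≠ 0)]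
            simp [this]
          · have : (∏ j, iotaL n z j ^ α j) = 0 := by
              apply Finset.prod_eq_zero (Finset.mem_univ (Fin.last n))
              rw [iotaL_last]
              exact zero_pow (by omega : α (Fin.last n) ≠ 0)
            simp [this]
      · rfl
    have htend : Filter.Tendsto (iotaL n) (𝓝 0) (𝓝 (0 : Fin (n + 1) → ℂ)) := by
      simpa using (iotaL n).continuous.tendsto 0
    have hcomp := (hO m).comp_tendsto htend
    have hcomp2 : (fun z : Fin n → ℂ => ((r (Φ (iotaL n z)) : ℝ) : ℂ)) =O[𝓝 0]
        fun z : Fin n → ℂ => ‖iotaL n z‖ ^ m := by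
      refine hcomp.congr (fun z => ?_) (fun _ => rfl)
      simp only [Function.comp_apply]
      rw [hsum0 z, sub_zero]
    have hbound : (fun z : Fin n → ℂ => ‖iotaL n z‖ ^ m) =O[𝓝 0]
        fun z : Fin n → ℂ => ‖z‖ ^ m := by
      refine IsBigO.of_bound 1 (Filter.Eventually.of_forall fun z => ?_)
      rw [one_mul]
      have h1 : ‖iotaL n z‖ ^ m ≤ ‖z‖ ^ m :=
        pow_le_pow_left₀ (norm_nonneg _) (iotaL_norm_le z) m
      calc ‖‖iotaL n z‖ ^ m‖ = ‖iotaL n z‖ ^ m := by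
            rw [Real.norm_eq_abs, abs_of_nonneg (by positivity)]
        _ ≤ ‖z‖ ^ m := h1
        _ ≤ ‖‖z‖ ^ m‖ := le_abs_self _
    have := hcomp2.trans hbound
    have hnorm := this.norm_left
    refine IsBigO.of_norm_left ?_
    refine hnorm.congr (fun z => ?_) (fun _ => rfl)
    simp [Complex.norm_real]
end

section
/- Let M ⊂ ℂ² be defined by 2Re(w) + F(z,z̄) = 0 with F smooth, F(0)=0, ∇F(0)=0, and suppose Δ₁(M,0) = ∞, so the Taylor series of F is 2∑_{j≥2} Re(c_j z^j) with associated formal power series S(z) = ∑_{j≥2} c_j z^j. If the convergence radius of S is positive, then there exists a holomorphic change of coordinate w* = w − S(z) in which M is defined by 2Re(w*) + F*(z,z̄) = 0 with F* flat at the origin (all derivatives of F* vanish at 0). -/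
open Topology Asymptotics Filter

/-- `f` vanishes to order at least `k` at `0 ∈ ℂ`. -/
def ordGE {E : Type*} [NormedAddCommGroup E] (f : ℂ → E) (k : ℕ) : Prop :=
  f =O[𝓝 0] fun t : ℂ => t ^ k

/-- The D'Angelo type `Δ₁({r = 0}, p)` is infinite. -/
def DAngeloTypeInfinite {E : Type*} [NormedAddCommGroup E] [NormedSpace ℂ E]
    (r : E → ℝ) (p : E) : Prop :=
  ∀ C : ℕ, ∃ γ : ℂ → E, AnalyticAt ℂ γ 0 ∧ γ 0 = p ∧
    ¬ (∀ᶠ t in 𝓝 (0 : ℂ), γ t = p) ∧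
    ∃ m : ℕ, 1 ≤ m ∧ ¬ ordGE (fun t => γ t - p) (m + 1) ∧
      ordGE (fun t => r (γ t)) (C * m)

/-- Flatness condition expressed via big-O estimates of all orders. -/
def FlatO {G : Type*} [NormedAddCommGroup G] (f : ℂ → G) : Prop :=
  ∀ M : ℕ, f =O[𝓝 0] fun z : ℂ => ‖z‖ ^ M

lemma flatO_zero {G : Type*} [NormedAddCommGroup G] {f : ℂ → G} (hf : FlatO f)
    (hc : ContinuousAt f 0) : f 0 = 0 := by
  have h1 : Filter.Tendsto (fun z : ℂ => ‖z‖ ^ 1) (𝓝 0) (𝓝 0) := by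
    have := (continuous_norm.tendsto (0 : ℂ)).pow 1
    simpa using this
  have h2 : Filter.Tendsto f (𝓝 0) (𝓝 0) := (hf 1).trans_tendsto h1
  exact tendsto_nhds_unique hc h2

lemma flatO_fderiv_zero {G : Type*} [NormedAddCommGroup G] [NormedSpace ℝ G] {f : ℂ → G}
    (hf : FlatO f) (hd : DifferentiableAt ℝ f 0) : fderiv ℝ f 0 = 0 := by
  have h0 : f 0 = 0 := flatO_zero hf hd.continuousAt
  have hsq : (fun z : ℂ => ‖z‖ ^ 2) =o[𝓝 0] fun z : ℂ => z := by
    rw [Asymptotics.isLittleO_iff]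
    intro c hc
    filter_upwards [Metric.ball_mem_nhds (0 : ℂ) hc] with z hz
    rw [Metric.mem_ball, dist_zero_right] at hz
    have : ‖z‖ ^ 2 = ‖z‖ * ‖z‖ := sq ‖z‖
    rw [Real.norm_eq_abs, abs_of_nonneg (pow_nonneg (norm_nonneg _) _), this]
    exact mul_le_mul_of_nonneg_right hz.le (norm_nonneg _)
  have hlo : f =o[𝓝 0] fun z : ℂ => z := (hf 2).trans_isLittleO hsq
  have : HasFDerivAt f (0 : ℂ →L[ℝ] G) 0 := by
    rw [hasFDerivAt_iff_isLittleO_nhds_zero]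
    simpa [h0] using hlo
  exact this.fderiv

lemma flatO_fderiv {G : Type*} [NormedAddCommGroup G] [NormedSpace ℝ G] {f : ℂ → G} {ε : ℝ}
    (hε : 0 < ε) (hf : ContDiffOn ℝ (⊤ : ℕ∞) f (Metric.ball 0 ε)) (hflat : FlatO f) :
    FlatO (fderiv ℝ f) := by
  have hball : Metric.ball (0 : ℂ) ε ∈ 𝓝 0 := Metric.ball_mem_nhds _ hε
  have hfa : ContDiffAt ℝ (⊤ : ℕ∞) f 0 := hf.contDiffAt hball
  have hf' : ContDiffAt ℝ 1 (fderiv ℝ f) 0 :=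
    hfa.fderiv_right (by
      have : ((1 + 1 : ℕ∞) : WithTop ℕ∞) ≤ ((⊤ : ℕ∞) : WithTop ℕ∞) :=
        WithTop.coe_le_coe.mpr le_top
      simpa using this)
  have hdiff : ∀ x ∈ Metric.ball (0 : ℂ) ε, HasFDerivAt f (fderiv ℝ f x) x := fun x hx =>
    ((hf.differentiableOn (by
      have : ((1 : ℕ∞) : WithTop ℕ∞) ≤ ((⊤ : ℕ∞) : WithTop ℕ∞) :=
        WithTop.coe_le_coe.mpr le_top
      simpa using this)).differentiableAt (Metric.isOpen_ball.mem_nhds hx)).hasFDerivAt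
  have hd0 : fderiv ℝ f 0 = 0 :=
    flatO_fderiv_zero hflat ((hdiff 0 (Metric.mem_ball_self hε)).differentiableAt)
  intro M
  match M with
  | 0 =>
    have : (fderiv ℝ f) =O[𝓝 0] fun _ : ℂ => (1 : ℝ) := hf'.continuousAt.isBigO_one ℝ
    simpa using this
  | m + 1 =>
    set P : ℕ := 2 * m + 4 with hP
    obtain ⟨C, hC, hCb⟩ := (hflat P).exists_pos
    rw [Asymptotics.isBigOWith_iff] at hCb
    obtain ⟨δ₁, hδ₁, h₁⟩ := Metric.eventually_nhds_iff.mp hCb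
    have h₁' : ∀ z : ℂ, ‖z‖ < δ₁ → ‖f z‖ ≤ C * ‖z‖ ^ P := by
      intro z hz
      have := h₁ (show dist z 0 < δ₁ by simpa [dist_zero_right] using hz)
      simpa [Real.norm_eq_abs, abs_of_nonneg (pow_nonneg (norm_nonneg z) P)] using this
    obtain ⟨K, t, ht, hlip⟩ := hf'.exists_lipschitzOnWith
    obtain ⟨δ₂, hδ₂, h₂⟩ := Metric.mem_nhds_iff.mp (Filter.inter_mem ht hball)
    set η : ℝ := min (min δ₁ δ₂ / 2) 1 with hη
    have hηpos : 0 < η := by positivity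
    set C' : ℝ := K + 2 ^ (P + 2) * C with hC'
    have hC'nn : 0 ≤ C' := by positivity
    have claim : ∀ z : ℂ, ‖z‖ < η → ‖fderiv ℝ f z‖ ≤ C' * ‖z‖ ^ (m + 1) := by
      intro z hzη
      rcases eq_or_ne z 0 with rfl | hz0
      · simp [hd0, hC'nn]
      · have hzpos : 0 < ‖z‖ := norm_pos_iff.mpr hz0
        have hz1 : ‖z‖ ≤ 1 := le_of_lt (lt_of_lt_of_le hzη (min_le_right _ _))
        have hzδ : 2 * ‖z‖ < min δ₁ δ₂ := by
          have : ‖z‖ < min δ₁ δ₂ / 2 := lt_of_lt_of_le hzη (min_le_left _ _)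
          linarith
        set r : ℝ := ‖z‖ ^ (m + 2) with hr
        have hrpos : 0 < r := pow_pos hzpos _
        have hrz : r ≤ ‖z‖ := by
          calc r ≤ ‖z‖ ^ 1 := pow_le_pow_of_le_one (norm_nonneg z) hz1 (by omega)
          _ = ‖z‖ := pow_one _
        have hsub : ∀ x : ℂ, x ∈ Metric.ball z r → ‖x‖ < min δ₁ δ₂ := by
          intro x hx
          rw [Metric.mem_ball, dist_eq_norm] at hx
          calc ‖x‖ = ‖x - z + z‖ := by ring_nf
          _ ≤ ‖x - z‖ + ‖z‖ := norm_add_le _ _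
          _ < r + ‖z‖ := by linarith
          _ ≤ 2 * ‖z‖ := by linarith
          _ < min δ₁ δ₂ := hzδ
        have hsubδ₂ : ∀ x : ℂ, x ∈ Metric.ball z r → x ∈ t ∩ Metric.ball 0 ε := by
          intro x hx
          apply h₂
          rw [Metric.mem_ball, dist_zero_right]
          exact lt_of_lt_of_le (hsub x hx) (min_le_right _ _)
        have hzball : z ∈ Metric.ball z r := Metric.mem_ball_self hrpos
        have key : ∀ y ∈ Metric.ball z r,
            ‖f y - f z - (fderiv ℝ f z) (y - z)‖ ≤ (K * r) * ‖y - z‖ := by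
          intro y hy
          apply Convex.norm_image_sub_le_of_norm_hasFDerivWithin_le'
            (f' := fun x => fderiv ℝ f x) (fun x hx =>
              (hdiff x ((hsubδ₂ x hx).2)).hasFDerivWithinAt)
            (fun x hx => ?_) (convex_ball z r) hzball hy
          have hxt : x ∈ t := (hsubδ₂ x hx).1
          have hzt : z ∈ t := (hsubδ₂ z hzball).1
          have := hlip.dist_le_mul x hxt z hzt
          rw [dist_eq_norm, dist_eq_norm] at this
          refine this.trans ?_
          have hxz : ‖x - z‖ ≤ r := by
            rw [Metric.mem_ball, dist_eq_norm] at hx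
            exact hx.le
          exact mul_le_mul_of_nonneg_left hxz K.2
        have hop : ‖fderiv ℝ f z‖ ≤ K * r + 2 ^ (P + 2) * C * ‖z‖ ^ P / r := by
          apply ContinuousLinearMap.opNorm_le_of_shell (ε := r) hrpos ?_ (c := (2 : ℝ))
            (by norm_num)
          · intro u hu1 hu2
            have hu1' : r / 2 ≤ ‖u‖ := by simpa using hu1
            have hupos : 0 < ‖u‖ := lt_of_lt_of_le (by positivity) hu1'
            have hyball : z + u ∈ Metric.ball z r := by
              rw [Metric.mem_ball, dist_eq_norm]
              simpa using hu2
            have h1 := key (z + u) hyball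
            simp only [add_sub_cancel_left] at h1
            have hzu : ‖z + u‖ ≤ 2 * ‖z‖ := by
              calc ‖z + u‖ ≤ ‖z‖ + ‖u‖ := norm_add_le _ _
              _ ≤ ‖z‖ + r := by linarith [hu2.le]
              _ ≤ 2 * ‖z‖ := by linarith
            have hzδ₁ : ‖z‖ < δ₁ := by
              have := min_le_left δ₁ δ₂; linarith
            have hzuδ₁ : ‖z + u‖ < δ₁ := by
              have := min_le_left δ₁ δ₂; linarith
            have h2z : (0:ℝ) ≤ 2 * ‖z‖ := by positivity
            have hfz : ‖f z‖ ≤ C * (2 * ‖z‖) ^ P := by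
              refine (h₁' z hzδ₁).trans ?_
              have : ‖z‖ ^ P ≤ (2 * ‖z‖) ^ P :=
                pow_le_pow_left₀ (norm_nonneg z) (by linarith) P
              exact mul_le_mul_of_nonneg_left this hC.le
            have hfzu : ‖f (z + u)‖ ≤ C * (2 * ‖z‖) ^ P := by
              refine (h₁' (z + u) hzuδ₁).trans ?_
              have : ‖z + u‖ ^ P ≤ (2 * ‖z‖) ^ P :=
                pow_le_pow_left₀ (norm_nonneg _) hzu P
              exact mul_le_mul_of_nonneg_left this hC.le
            have tri : ‖(fderiv ℝ f z) u‖ ≤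
                ‖f (z + u) - f z - (fderiv ℝ f z) u‖ + (‖f (z + u)‖ + ‖f z‖) := by
              have e' : ‖(fderiv ℝ f z) u‖ =
                  ‖(f (z + u) - f z) - (f (z + u) - f z - (fderiv ℝ f z) u)‖ := by
                congr 1; abel
              rw [e']
              refine (norm_sub_le _ _).trans ?_
              have h := norm_sub_le (f (z + u)) (f z)
              linarith
            have hpow : (2:ℝ) ^ P * C * ‖z‖ ^ P * 2 ≤ 2 ^ (P + 2) * C * ‖z‖ ^ P / r * ‖u‖ := by
              rw [div_mul_eq_mul_div, le_div_iff₀ hrpos]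
              have hru : r ≤ 2 * ‖u‖ := by linarith
              calc 2 ^ P * C * ‖z‖ ^ P * 2 * r ≤ 2 ^ P * C * ‖z‖ ^ P * 2 * (2 * ‖u‖) := by
                    apply mul_le_mul_of_nonneg_left hru (by positivity)
                _ = 2 ^ (P + 2) * C * ‖z‖ ^ P * ‖u‖ := by ring
            have hCP : C * (2 * ‖z‖) ^ P = 2 ^ P * C * ‖z‖ ^ P := by rw [mul_pow]; ring
            rw [hCP] at hfz hfzu
            rw [add_mul]
            linarith
          · positivity
        refine hop.trans ?_
        have e1 : (K : ℝ) * r ≤ K * ‖z‖ ^ (m + 1) := by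
          have : r ≤ ‖z‖ ^ (m + 1) := by
            rw [hr, pow_succ]
            exact mul_le_of_le_one_right (pow_nonneg (norm_nonneg z) _) hz1
          exact mul_le_mul_of_nonneg_left this K.2
        have e2 : 2 ^ (P + 2) * C * ‖z‖ ^ P / r ≤ 2 ^ (P + 2) * C * ‖z‖ ^ (m + 1) := by
          rw [div_le_iff₀ hrpos]
          have hPsplit : ‖z‖ ^ P = ‖z‖ ^ (m + 2) * ‖z‖ ^ (m + 2) := by
            rw [← pow_add]; congr 1; omega
          have hmono : ‖z‖ ^ (m + 2) ≤ ‖z‖ ^ (m + 1) :=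
            pow_le_pow_of_le_one (norm_nonneg z) hz1 (by omega)
          calc 2 ^ (P + 2) * C * ‖z‖ ^ P
              = (2 ^ (P + 2) * C * ‖z‖ ^ (m + 2)) * r := by rw [hPsplit, hr]; ring
            _ ≤ (2 ^ (P + 2) * C * ‖z‖ ^ (m + 1)) * r := by
                apply mul_le_mul_of_nonneg_right _ hrpos.le
                exact mul_le_mul_of_nonneg_left hmono (by positivity)
        rw [hC', add_mul]
        linarith

    apply Asymptotics.IsBigO.of_bound C'
    filter_upwards [Metric.ball_mem_nhds (0 : ℂ) hηpos] with z hz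
    rw [Metric.mem_ball, dist_zero_right] at hz
    calc ‖fderiv ℝ f z‖ ≤ C' * ‖z‖ ^ (m + 1) := claim z hz
    _ ≤ C' * ‖‖z‖ ^ (m + 1)‖ := by
      rw [Real.norm_eq_abs, abs_of_nonneg (pow_nonneg (norm_nonneg z) _)]

lemma flatO_iteratedFDeriv : ∀ (n : ℕ) {G : Type*} [NormedAddCommGroup G] [NormedSpace ℝ G]
    (f : ℂ → G) (ε : ℝ), 0 < ε → ContDiffOn ℝ (⊤ : ℕ∞) f (Metric.ball 0 ε) → FlatO f →
    iteratedFDeriv ℝ n f 0 = 0 := by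
  intro n
  induction n with
  | zero =>
    intro G _ _ f ε hε hf hflat
    ext m
    have h0 : f 0 = 0 := flatO_zero hflat
      ((hf.continuousOn.continuousAt (Metric.ball_mem_nhds _ hε)))
    simp [h0]
  | succ n IH =>
    intro G _ _ f ε hε hf hflat
    have hf' : ContDiffOn ℝ (⊤ : ℕ∞) (fderiv ℝ f) (Metric.ball 0 ε) := by
      apply hf.fderiv_of_isOpen Metric.isOpen_ball
      have : ((⊤ : ℕ∞) : WithTop ℕ∞) + 1 ≤ ((⊤ : ℕ∞) : WithTop ℕ∞) := by
        have h := WithTop.coe_le_coe.mpr (le_top : (⊤ : ℕ∞) + 1 ≤ (⊤ : ℕ∞))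
        simpa using h
      exact this
    have hflat' := flatO_fderiv hε hf hflat
    have hIH : iteratedFDeriv ℝ n (fderiv ℝ f) 0 = 0 := IH (fderiv ℝ f) ε hε hf' hflat'
    rw [iteratedFDeriv_succ_eq_comp_right]
    simp only [Function.comp_apply]
    rw [show (fun y => fderiv ℝ f y) = fderiv ℝ f from rfl, hIH]
    exact (continuousMultilinearCurryRightEquiv' ℝ n ℂ G).symm.map_zero

/-- Let `M ⊆ ℂ²` be defined by `2 Re w + F(z,z̄) = 0` with
`Δ₁(M,0) = ∞`, so that the Taylor series of `F` is `2∑_{j≥2} Re (c_j z^j)`, with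
associated formal power series `S(z) = ∑_{j≥2} c_j z^j`.  If the radius of convergence
of `S` is positive, then `S` defines a holomorphic function near `0`, the function
`F*(z) = F(z) − 2 Re S(z)` is flat at the origin, and in the holomorphic coordinate
`w* = w − (−S(z))` the hypersurface `M` is defined by `2 Re w* + F*(z,z̄) = 0`. -/
theorem statement6 (F : ℂ → ℝ)
    (hF : ContDiff ℝ (⊤ : ℕ∞) F) (hF0 : F 0 = 0) (hdF : fderiv ℝ F 0 = 0)
    (hΔ : DAngeloTypeInfinite (fun q : ℂ × ℂ => 2 * q.2.re + F q.1) 0)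
    (c : ℕ → ℂ) (hc0 : c 0 = 0) (hc1 : c 1 = 0)
    (hTaylor : ∀ N : ℕ,
      (fun z : ℂ => F z - ∑ j ∈ Finset.range N, 2 * (c j * z ^ j).re)
        =O[𝓝 0] fun z => z ^ N)
    (hrad : ∃ R : ℝ, 0 < R ∧ ∀ z : ℂ, ‖z‖ < R → Summable fun j => c j * z ^ j) :
    ∃ S : ℂ → ℂ, AnalyticAt ℂ S 0 ∧ S 0 = 0 ∧
      (∀ᶠ z in 𝓝 (0 : ℂ), S z = ∑' j, c j * z ^ j) ∧
      (∀ N : ℕ, iteratedFDeriv ℝ N (fun z : ℂ => F z - 2 * (S z).re) 0 = 0) ∧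
      (∀ z w : ℂ, 2 * w.re + F z = 2 * (w + S z).re + (F z - 2 * (S z).re)) := by
  classical
  obtain ⟨R, hR, hsum⟩ := hrad
  set p : FormalMultilinearSeries ℂ ℂ ℂ := FormalMultilinearSeries.ofScalars ℂ c with hp
  have hhalf : (0 : ℝ) ≤ R / 2 := by linarith
  have hlt : ‖((R / 2 : ℝ) : ℂ)‖ < R := by
    rw [Complex.norm_real, Real.norm_eq_abs, abs_of_nonneg hhalf]
    linarith
  have hsummable := hsum _ hlt
  have htend : Filter.Tendsto (fun n => ‖p n‖ * (R / 2) ^ n) Filter.atTop (𝓝 0) := by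
    have h0 := hsummable.tendsto_atTop_zero
    have he : (fun n => ‖p n‖ * (R / 2) ^ n) = fun n => ‖c n * ((R / 2 : ℝ) : ℂ) ^ n‖ := by
      funext n
      rw [hp, FormalMultilinearSeries.ofScalars_norm, norm_mul, norm_pow, Complex.norm_real,
        Real.norm_eq_abs, abs_of_nonneg hhalf]
    rw [he]
    simpa using h0.norm
  have hrle : ((R / 2).toNNReal : ENNReal) ≤ p.radius := by
    apply p.le_radius_of_tendsto (l := 0)
    rw [Real.coe_toNNReal _ hhalf]
    exact htend
  have hradpos : 0 < p.radius :=
    lt_of_lt_of_le (by exact_mod_cast Real.toNNReal_pos.mpr (by linarith)) hrle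
  have hball := p.hasFPowerSeriesOnBall hradpos
  have hSat : HasFPowerSeriesAt p.sum p 0 := hball.hasFPowerSeriesAt
  set S : ℂ → ℂ := p.sum with hS
  have hSeq : ∀ z : ℂ, S z = ∑' j, c j * z ^ j := by
    intro z
    refine tsum_congr fun n => ?_
    rw [hp, FormalMultilinearSeries.ofScalars_apply_eq]
    simp [smul_eq_mul]
  have hS0 : S 0 = 0 := by
    rw [hSeq 0]
    have : ∀ j : ℕ, c j * (0 : ℂ) ^ j = 0 := by
      intro j
      cases j with
      | zero => simp [hc0]
      | succ k => simp
    rw [tsum_congr this, tsum_zero]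
  have hA : AnalyticAt ℂ S 0 := ⟨p, hSat⟩
  have hAR : AnalyticAt ℝ S 0 := hA.restrictScalars
  have hCAt : ContDiffAt ℝ (⊤ : WithTop ℕ∞) S 0 := hAR.contDiffAt
  obtain ⟨u, hu, hCOn⟩ := hCAt.contDiffOn (m := ((⊤ : ℕ∞) : WithTop ℕ∞)) le_top (fun _ => rfl)
  obtain ⟨ε, hε, hball'⟩ := Metric.mem_nhds_iff.mp hu
  have hSOn : ContDiffOn ℝ (⊤ : ℕ∞) S (Metric.ball 0 ε) := hCOn.mono hball'
  have hgOn : ContDiffOn ℝ (⊤ : ℕ∞) (fun z : ℂ => F z - 2 * (S z).re)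
      (Metric.ball 0 ε) := by
    apply ContDiffOn.sub hF.contDiffOn
    have hre : ContDiff ℝ (⊤ : ℕ∞) (fun w : ℂ => 2 * w.re) :=
      contDiff_const.mul Complex.reCLM.contDiff
    exact hre.comp_contDiffOn hSOn
  have hflatg : FlatO (fun z : ℂ => F z - 2 * (S z).re) := by
    intro M
    have h1 : (fun z : ℂ => F z - ∑ j ∈ Finset.range M, 2 * (c j * z ^ j).re)
        =O[𝓝 0] fun z : ℂ => ‖z‖ ^ M := by
      have h := (hTaylor M).norm_right
      simpa [norm_pow] using h
    have htail : (fun z : ℂ => S z - p.partialSum M z) =O[𝓝 0] fun z : ℂ => ‖z‖ ^ M := by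
      have h := hSat.isBigO_sub_partialSum_pow M
      simpa using h
    have hps : ∀ z : ℂ, p.partialSum M z = ∑ j ∈ Finset.range M, c j * z ^ j := by
      intro z
      unfold FormalMultilinearSeries.partialSum
      refine Finset.sum_congr rfl fun j _ => ?_
      rw [hp, FormalMultilinearSeries.ofScalars_apply_eq]
      simp [smul_eq_mul]
    have h2 : (fun z : ℂ => 2 * (S z).re - ∑ j ∈ Finset.range M, 2 * (c j * z ^ j).re)
        =O[𝓝 0] fun z : ℂ => ‖z‖ ^ M := by
      refine Asymptotics.IsBigO.trans ?_ htail
      apply Asymptotics.IsBigO.of_bound 2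
      filter_upwards with z
      have hb : 2 * (S z).re - ∑ j ∈ Finset.range M, 2 * (c j * z ^ j).re
          = 2 * (S z - p.partialSum M z).re := by
        rw [hps z, Complex.sub_re, Complex.re_sum, mul_sub, Finset.mul_sum]
      rw [hb, Real.norm_eq_abs, abs_mul]
      have h1' := Complex.abs_re_le_norm (S z - p.partialSum M z)
      have : |(2 : ℝ)| = 2 := by norm_num
      rw [this]
      nlinarith [norm_nonneg (S z - p.partialSum M z)]
    have h12 := h1.sub h2
    exact h12.congr (fun z => by ring) fun z => rfl
  refine ⟨S, hA, hS0, Filter.Eventually.of_forall hSeq,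
    fun N => flatO_iteratedFDeriv N _ ε hε hgOn hflatg, fun z w => ?_⟩
  simp [Complex.add_re]
  ring
end

section
/- Let M ⊂ ℂ² be defined by r = 2Re(w) + F(z,z̄) = 0 with Δ₁(M,0) = ∞ and formal series S(z) = ∑_{j≥2} c_j z^j as above. If there exists a regular holomorphic curve γ(t) = (t, −h(t)), with h holomorphic near 0 and h(0)=0, tangent to M at 0 to infinite order, then the Taylor coefficients of h equal the c_j, hence S converges on a neighborhood of 0 and S = h there. -/
open Topology Asymptotics Filter
open scoped ENNReal NNReal

/-- If `d * t ^ j = O(t ^ (j+1))` near `0` (punctured), then `d = 0`. -/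
lemma aux_const_isBigO {d : ℂ} {j : ℕ}
    (hO : (fun t : ℂ => d * t ^ j) =O[𝓝[≠] (0 : ℂ)] fun t => t ^ (j + 1)) : d = 0 := by
  by_contra hd
  obtain ⟨C, hC⟩ := hO.bound
  have h1 : ∀ᶠ t : ℂ in 𝓝[≠] 0, ‖d‖ ≤ C * ‖t‖ := by
    filter_upwards [hC, self_mem_nhdsWithin] with t ht ht0
    have htn : (0 : ℝ) < ‖t‖ ^ j := pow_pos (norm_pos_iff.mpr ht0) j
    rw [norm_mul, norm_pow, norm_pow] at ht
    have h2 : ‖d‖ * ‖t‖ ^ j ≤ C * ‖t‖ * ‖t‖ ^ j := by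
      calc ‖d‖ * ‖t‖ ^ j ≤ C * ‖t‖ ^ (j + 1) := ht
        _ = C * ‖t‖ * ‖t‖ ^ j := by ring
    exact le_of_mul_le_mul_right h2 htn
  have h2 : Tendsto (fun t : ℂ => C * ‖t‖) (𝓝[≠] 0) (𝓝 0) := by
    have h3 : Tendsto (fun t : ℂ => C * ‖t‖) (𝓝 0) (𝓝 (C * ‖(0 : ℂ)‖)) :=
      (continuous_norm.tendsto _).const_mul C
    simp only [norm_zero, mul_zero] at h3
    exact h3.mono_left nhdsWithin_le_nhds
  have h4 : ‖d‖ ≤ 0 := le_of_tendsto_of_tendsto tendsto_const_nhds h2 h1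
  exact hd (norm_le_zero_iff.mp h4)

/-- If `g` is analytic at `0`, `g 0 = 0`, and `Re ∘ g = O(t^N)`, then `g = O(t^N)` on the
punctured neighborhood of `0`. -/
lemma reBigO_to_BigO {g : ℂ → ℂ} (hg : AnalyticAt ℂ g 0) (hg0 : g 0 = 0) (N : ℕ)
    (hO : (fun t => (g t).re) =O[𝓝 0] fun t : ℂ => t ^ N) :
    g =O[𝓝[≠] (0 : ℂ)] fun t => t ^ N := by
  rcases eq_or_ne (analyticOrderAt g 0) ⊤ with htop | hfin
  · have hz : ∀ᶠ z in 𝓝 (0 : ℂ), g z = 0 := analyticOrderAt_eq_top.mp htop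
    have hz' : g =ᶠ[𝓝[≠] (0 : ℂ)] (fun _ => (0 : ℂ)) := hz.filter_mono nhdsWithin_le_nhds
    exact hz'.trans_isBigO (isBigO_zero _ _)
  · obtain ⟨m, hm⟩ : ∃ m : ℕ, analyticOrderAt g 0 = (m : ℕ∞) :=
      ⟨(analyticOrderAt g 0).toNat, (ENat.coe_toNat hfin).symm⟩
    obtain ⟨g₁, hg₁, hg₁0, heq0⟩ := hg.analyticOrderAt_eq_natCast.mp hm
    have heq : ∀ᶠ z : ℂ in 𝓝 0, g z = z ^ m * g₁ z := by
      filter_upwards [heq0] with z hz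
      simpa [smul_eq_mul] using hz
    have hNm : N ≤ m := by
      by_contra hlt
      push_neg at hlt
      have hm0 : m ≠ 0 := by
        rintro rfl
        have h0 := heq.self_of_nhds
        simp [hg0] at h0
        exact hg₁0 h0.symm
      obtain ⟨ω, hω⟩ := IsAlgClosed.exists_pow_nat_eq ((starRingEnd ℂ) (g₁ 0))
        (Nat.pos_of_ne_zero hm0)
      set L : ℝ := Complex.normSq (g₁ 0) with hLdef
      have hL : 0 < L := Complex.normSq_pos.mpr hg₁0
      have cmap : Tendsto (fun x : ℝ => ω * (x : ℂ)) (𝓝 0) (𝓝 0) := by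
        have hcont : Continuous fun x : ℝ => ω * (x : ℂ) :=
          continuous_const.mul Complex.continuous_ofReal
        have := hcont.tendsto 0
        simpa using this
      have hOx := hO.comp_tendsto cmap
      obtain ⟨C, hC⟩ := hOx.bound
      have heqx : ∀ᶠ x : ℝ in 𝓝 0, g (ω * x) = (ω * x) ^ m * g₁ (ω * x) := cmap.eventually heq
      set u : ℝ → ℝ := fun x => (ω ^ m * g₁ (ω * x)).re with hu
      have hub : ∀ᶠ x : ℝ in 𝓝[≠] 0, |u x| ≤ C * ‖ω‖ ^ N * |x| ^ (N - m) := by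
        filter_upwards [hC.filter_mono nhdsWithin_le_nhds,
          heqx.filter_mono nhdsWithin_le_nhds, self_mem_nhdsWithin] with x hx1 hx2 hx0
        simp only [Function.comp_apply] at hx1
        have hx0' : (0 : ℝ) < |x| := abs_pos.mpr hx0
        have e1 : (g (ω * (x : ℂ))).re = x ^ m * u x := by
          rw [hx2]
          have e2 : (ω * (x : ℂ)) ^ m * g₁ (ω * x) = ((x : ℂ) ^ m) * (ω ^ m * g₁ (ω * x)) := by
            ring
          rw [e2, ← Complex.ofReal_pow, Complex.re_ofReal_mul]
        rw [e1] at hx1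
        have e3 : ‖(ω * (x : ℂ)) ^ N‖ = ‖ω‖ ^ N * |x| ^ N := by
          rw [norm_pow, norm_mul, Complex.norm_real, Real.norm_eq_abs, mul_pow]
        rw [e3] at hx1
        have e4 : ‖x ^ m * u x‖ = |x| ^ m * |u x| := by
          rw [Real.norm_eq_abs, abs_mul, abs_pow]
        rw [e4] at hx1
        have e5 : |x| ^ N = |x| ^ (N - m) * |x| ^ m := by
          rw [← pow_add, Nat.sub_add_cancel hlt.le]
        have e6 : |x| ^ m * |u x| ≤ (C * ‖ω‖ ^ N * |x| ^ (N - m)) * |x| ^ m := by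
          calc |x| ^ m * |u x| ≤ C * (‖ω‖ ^ N * |x| ^ N) := hx1
            _ = (C * ‖ω‖ ^ N * |x| ^ (N - m)) * |x| ^ m := by rw [e5]; ring
        have e7 := le_of_mul_le_mul_right (by linarith [e6] : |u x| * |x| ^ m ≤
          (C * ‖ω‖ ^ N * |x| ^ (N - m)) * |x| ^ m) (pow_pos hx0' m)
        exact e7
      have hlimu : Tendsto u (𝓝[≠] (0 : ℝ)) (𝓝 L) := by
        have t1 : Tendsto (fun x : ℝ => g₁ (ω * x)) (𝓝 0) (𝓝 (g₁ 0)) :=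
          hg₁.continuousAt.tendsto.comp cmap
        have t2 : Tendsto (fun x : ℝ => ω ^ m * g₁ (ω * x)) (𝓝 0) (𝓝 (ω ^ m * g₁ 0)) :=
          t1.const_mul _
        have t3 : Tendsto u (𝓝 0) (𝓝 ((ω ^ m * g₁ 0).re)) :=
          (Complex.continuous_re.tendsto _).comp t2
        have e8 : (ω ^ m * g₁ 0).re = L := by
          rw [hω]
          have : (starRingEnd ℂ) (g₁ 0) * g₁ 0 = (Complex.normSq (g₁ 0) : ℂ) := by
            rw [mul_comm, Complex.mul_conj]
          rw [this, Complex.ofReal_re]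
        rw [e8] at t3
        exact t3.mono_left nhdsWithin_le_nhds
      have hlimrhs : Tendsto (fun x : ℝ => C * ‖ω‖ ^ N * |x| ^ (N - m)) (𝓝[≠] (0 : ℝ)) (𝓝 0) := by
        have t4 : Tendsto (fun x : ℝ => C * ‖ω‖ ^ N * |x| ^ (N - m)) (𝓝 0)
            (𝓝 (C * ‖ω‖ ^ N * |(0 : ℝ)| ^ (N - m))) :=
          (continuous_const.mul (continuous_abs.pow _)).tendsto 0
        have hNsub : N - m ≠ 0 := Nat.sub_ne_zero_of_lt hlt
        simpa [zero_pow hNsub] using t4.mono_left nhdsWithin_le_nhds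
      have h5 : |L| ≤ 0 := le_of_tendsto_of_tendsto hlimu.abs hlimrhs hub
      have h6 : L ≤ |L| := le_abs_self L
      linarith
    -- now conclude
    have hbound : ∀ᶠ t : ℂ in 𝓝 0, ‖g₁ t‖ ≤ ‖g₁ 0‖ + 1 := by
      have t5 : Tendsto (fun t : ℂ => ‖g₁ t‖) (𝓝 0) (𝓝 ‖g₁ 0‖) := hg₁.continuousAt.norm
      filter_upwards [t5.eventually_lt_const (lt_add_one ‖g₁ 0‖)] with t ht
      exact ht.le
    have hsmall : ∀ᶠ t : ℂ in 𝓝 0, ‖t‖ ≤ 1 := by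
      filter_upwards [Metric.ball_mem_nhds (0 : ℂ) one_pos] with t ht
      exact (mem_ball_zero_iff.mp ht).le
    refine isBigO_iff.mpr ⟨‖g₁ 0‖ + 1, ?_⟩
    filter_upwards [heq.filter_mono nhdsWithin_le_nhds, hbound.filter_mono nhdsWithin_le_nhds,
      hsmall.filter_mono nhdsWithin_le_nhds] with t h1 h2 h3
    rw [h1]
    calc ‖t ^ m * g₁ t‖ = ‖t‖ ^ m * ‖g₁ t‖ := by rw [norm_mul, norm_pow]
      _ ≤ ‖t‖ ^ N * (‖g₁ 0‖ + 1) := by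
          apply mul_le_mul (pow_le_pow_of_le_one (norm_nonneg t) h3 hNm) h2 (norm_nonneg _)
            (pow_nonneg (norm_nonneg t) N)
      _ = (‖g₁ 0‖ + 1) * ‖t ^ N‖ := by rw [norm_pow]; ring

/-- Let `M ⊆ ℂ²` be defined by `r = 2 Re w + F(z,z̄) = 0` with
`Δ₁(M,0) = ∞` and formal series `S(z) = ∑_{j≥2} c_j z^j` coming from the pure-terms
Taylor expansion of `F`.  If the regular holomorphic curve `γ(t) = (t, −h(t))`
(`h` holomorphic, `h(0) = 0`) is tangent to `M` at `0` to infinite order, then the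
Taylor coefficients of `h` equal the `c_j`; hence `S` converges on a neighborhood of
`0` and `S = h` there. -/
theorem statement7 (F : ℂ → ℝ)
    (hF : ContDiff ℝ (⊤ : ℕ∞) F) (hF0 : F 0 = 0) (hdF : fderiv ℝ F 0 = 0)
    (hΔ : DAngeloTypeInfinite (fun q : ℂ × ℂ => 2 * q.2.re + F q.1) 0)
    (c : ℕ → ℂ) (hc0 : c 0 = 0) (hc1 : c 1 = 0)
    (hTaylor : ∀ N : ℕ,
      (fun z : ℂ => F z - ∑ j ∈ Finset.range N, 2 * (c j * z ^ j).re)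
        =O[𝓝 0] fun z => z ^ N)
    (h : ℂ → ℂ) (hh : AnalyticAt ℂ h 0) (hh0 : h 0 = 0)
    (htan : ∀ N : ℕ,
      (fun t : ℂ => 2 * (-(h t)).re + F t) =O[𝓝 0] fun t : ℂ => t ^ N) :
    (∀ j : ℕ, iteratedDeriv j h 0 = (Nat.factorial j : ℂ) * c j) ∧
    ∃ ε : ℝ, 0 < ε ∧ ∀ z : ℂ, ‖z‖ < ε →
      (Summable fun j => c j * z ^ j) ∧ ∑' j, c j * z ^ j = h z := by
  obtain ⟨p, hp⟩ := hh
  -- main claim: the coefficients of the power series of `h` are the `c j`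
  have key : ∀ j : ℕ, p.coeff j = c j := by
    intro j
    induction j using Nat.strong_induction_on with
    | _ j ih =>
    set N := j + 1 with hN
    -- `Re((∑_{k<N} c_k t^k) - h t) = O(t^N)`
    have hA := (htan N).sub (hTaylor N)
    have hre : (fun t : ℂ => ((∑ k ∈ Finset.range N, c k * t ^ k) - h t).re)
        =O[𝓝 0] fun t : ℂ => t ^ N := by
      have e : ∀ t : ℂ, ((∑ k ∈ Finset.range N, c k * t ^ k) - h t).re
          = (2⁻¹ : ℝ) * ((2 * (-(h t)).re + F t)
            - (F t - ∑ k ∈ Finset.range N, 2 * (c k * t ^ k).re)) := by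
        intro t
        have e1 : ((∑ k ∈ Finset.range N, c k * t ^ k) - h t).re
            = (∑ k ∈ Finset.range N, (c k * t ^ k).re) - (h t).re := by
          simp [Complex.sub_re, Complex.re_sum]
        have e2 : (∑ k ∈ Finset.range N, 2 * (c k * t ^ k).re)
            = 2 * ∑ k ∈ Finset.range N, (c k * t ^ k).re := by
          rw [Finset.mul_sum]
        rw [e1, e2, Complex.neg_re]
        ring
      have hB := hA.const_mul_left (2⁻¹ : ℝ)
      exact hB.congr' (Eventually.of_forall fun t => (e t).symm) EventuallyEq.rfl
    -- analyticity of the difference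
    have hpoly : AnalyticAt ℂ (fun t : ℂ => ∑ k ∈ Finset.range N, c k * t ^ k) 0 := by
      apply Finset.analyticAt_fun_sum
      intro k _
      exact (analyticAt_const).mul ((analyticAt_id).pow k)
    have hg : AnalyticAt ℂ (fun t : ℂ => (∑ k ∈ Finset.range N, c k * t ^ k) - h t) 0 :=
      hpoly.sub hp.analyticAt
    have hg0 : (∑ k ∈ Finset.range N, c k * (0 : ℂ) ^ k) - h 0 = 0 := by
      have hsum0 : (∑ k ∈ Finset.range N, c k * (0 : ℂ) ^ k) = 0 := by
        apply Finset.sum_eq_zero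
        intro k _
        rcases k with _ | k
        · simp [hc0]
        · simp
      rw [hsum0, hh0, sub_zero]
    have hbig := reBigO_to_BigO hg hg0 N hre
    -- Taylor approximation of `h`
    have ht2 : (fun t : ℂ => h t - p.partialSum N t) =O[𝓝[≠] (0 : ℂ)] fun t => t ^ N := by
      have h1 := hp.isBigO_sub_partialSum_pow N
      simp only [zero_add] at h1
      have h2 : (fun t : ℂ => ‖t‖ ^ N) =O[𝓝 (0 : ℂ)] fun t => t ^ N := by
        apply isBigO_of_le
        intro x
        simp [abs_norm]
      exact (h1.trans h2).mono nhdsWithin_le_nhds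
    have hsum := hbig.add ht2
    have hPS : ∀ t : ℂ, ((∑ k ∈ Finset.range N, c k * t ^ k) - h t)
        + (h t - p.partialSum N t) = (c j - p.coeff j) * t ^ j := by
      intro t
      have e1 : p.partialSum N t = ∑ k ∈ Finset.range N, p.coeff k * t ^ k := by
        simp [FormalMultilinearSeries.partialSum,
          FormalMultilinearSeries.apply_eq_pow_smul_coeff, smul_eq_mul, mul_comm]
      rw [e1]
      have e2 : ((∑ k ∈ Finset.range N, c k * t ^ k) - h t)
          + (h t - ∑ k ∈ Finset.range N, p.coeff k * t ^ k)
          = ∑ k ∈ Finset.range N, (c k - p.coeff k) * t ^ k := by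
        rw [Finset.sum_congr rfl (fun k _ => sub_mul (c k) (p.coeff k) (t ^ k)),
          Finset.sum_sub_distrib]
        ring
      rw [e2, hN, Finset.sum_range_succ]
      have e3 : ∑ k ∈ Finset.range j, (c k - p.coeff k) * t ^ k = 0 := by
        apply Finset.sum_eq_zero
        intro k hk
        rw [ih k (Finset.mem_range.mp hk), sub_self, zero_mul]
      rw [e3, zero_add]
    have hfin : (fun t : ℂ => (c j - p.coeff j) * t ^ j) =O[𝓝[≠] (0 : ℂ)]
        fun t => t ^ (j + 1) :=
      hsum.congr' (Eventually.of_forall hPS) EventuallyEq.rfl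
    have hz := aux_const_isBigO hfin
    exact (sub_eq_zero.mp hz).symm
  obtain ⟨r, hball⟩ := hp
  constructor
  · intro j
    have hfac := hball.factorial_smul (1 : ℂ) j
    have e1 : iteratedDeriv j h 0 = iteratedFDeriv ℂ j h 0 fun _ => (1 : ℂ) :=
      iteratedDeriv_eq_iteratedFDeriv
    rw [e1, ← hfac]
    have e2 : p j (fun _ => (1 : ℂ)) = p.coeff j := rfl
    rw [e2, key j, nsmul_eq_mul]
  · set ε : ℝ := (min r 1).toReal with hε
    have hmin_ne_top : min r 1 ≠ ⊤ :=
      (lt_of_le_of_lt (min_le_right r 1) ENNReal.one_lt_top).ne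
    have hεpos : 0 < ε := by
      apply ENNReal.toReal_pos _ hmin_ne_top
      exact (lt_min hball.r_pos zero_lt_one).ne'
    refine ⟨ε, hεpos, fun z hz => ?_⟩
    have hmem : z ∈ Metric.eball (0 : ℂ) r := by
      rw [Metric.mem_eball, edist_zero_right]
      have h1 : (‖z‖₊ : ℝ≥0∞) < min r 1 := by
        rw [← ENNReal.ofReal_toReal hmin_ne_top]
        rw [← enorm_eq_nnnorm, ← ofReal_norm]
        exact (ENNReal.ofReal_lt_ofReal_iff hεpos).mpr hz
      exact lt_of_lt_of_le h1 (min_le_left _ _)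
    have hhs := hball.hasSum hmem
    simp only [zero_add] at hhs
    have hhs' : HasSum (fun n => c n * z ^ n) (h z) := by
      have e3 : (fun n => p n fun _ => z) = fun n => c n * z ^ n := by
        funext n
        rw [FormalMultilinearSeries.apply_eq_pow_smul_coeff, key n, smul_eq_mul, mul_comm]
      rwa [e3] at hhs
    exact ⟨hhs'.summable, hhs'.tsum_eq⟩
end

section
/- Let M ⊂ ℂ² be defined by 2Re(w) + F(z,z̄) = 0 with Δ₁(M,0) = ∞ and associated formal series S(z) = ∑_{j≥2} c_j z^j from the pure-terms Taylor expansion of F. Then the following are equivalent: (i) there is no nonconstant holomorphic curve tangent to M at 0 to infinite order; (ii) the radius of convergence of S equals 0. -/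
open Topology Asymptotics Filter

section Helpers

lemma lemD {a : ℂ} {k : ℕ} (h : (fun t : ℂ => a * t ^ k) =O[𝓝 0] fun t => t ^ (k+1)) :
    a = 0 := by
  rcases h.isBigOWith with ⟨C, hC⟩
  rw [isBigOWith_iff] at hC
  have h2 : ∀ᶠ t in 𝓝[≠] (0:ℂ), ‖a‖ ≤ C * ‖t‖ := by
    filter_upwards [hC.filter_mono nhdsWithin_le_nhds, self_mem_nhdsWithin] with t ht ht0
    have hne : t ≠ 0 := ht0
    have hkt : (0:ℝ) < ‖t‖ ^ k := by
      apply pow_pos; simpa [norm_pos_iff] using hne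
    rw [norm_mul, norm_pow, norm_pow, pow_succ] at ht
    have : ‖a‖ * ‖t‖ ^ k ≤ C * ‖t‖ * ‖t‖ ^ k := by
      calc ‖a‖ * ‖t‖ ^ k ≤ C * (‖t‖ ^ k * ‖t‖) := ht
      _ = C * ‖t‖ * ‖t‖ ^ k := by ring
    exact le_of_mul_le_mul_right this hkt
  have htend : Tendsto (fun t : ℂ => C * ‖t‖) (𝓝[≠] 0) (𝓝 (C * ‖(0:ℂ)‖)) :=
    ((continuous_const.mul continuous_norm).tendsto _).mono_left nhdsWithin_le_nhds
  have := ge_of_tendsto htend h2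
  simp only [norm_zero, mul_zero] at this
  simpa using norm_le_zero_iff.mp this

lemma pow_isBigO_pow {m n : ℕ} (h : m ≤ n) :
    (fun t : ℂ => t ^ n) =O[𝓝 0] fun t => t ^ m := by
  have he : (fun t : ℂ => t ^ n) = fun t => t ^ m * t ^ (n - m) := by
    funext t; rw [← pow_add]; congr 1; omega
  rw [he]
  have h1 : (fun t : ℂ => t ^ m) =O[𝓝 0] fun t => t ^ m := isBigO_refl _ _
  have h2 : (fun t : ℂ => t ^ (n - m)) =O[𝓝 0] fun _ : ℂ => (1:ℂ) := by
    apply IsBigO.of_bound 1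
    filter_upwards [Metric.ball_mem_nhds (0:ℂ) one_pos] with t ht
    simp only [Metric.mem_ball, dist_zero_right] at ht
    simpa using pow_le_one₀ (norm_nonneg t) ht.le
  simpa using h1.mul h2

lemma norm_pow_bigO : ∀ (k : ℕ), (fun y : ℂ => ‖y‖ ^ k) =O[𝓝 0] fun y => y ^ k := by
  intro k
  apply IsBigO.of_bound 1
  filter_upwards with y
  simp [norm_pow]

lemma lemB {f : ℂ → ℂ} {p : FormalMultilinearSeries ℂ ℂ ℂ}
    (hp : HasFPowerSeriesAt f p 0) {N : ℕ} (hO : f =O[𝓝 0] fun t => t ^ N) :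
    ∀ i < N, p.coeff i = 0 := by
  intro i
  induction i using Nat.strong_induction_on with
  | _ i IH =>
    intro hiN
    have hps := hp.isBigO_sub_partialSum_pow (i + 1)
    simp only [zero_add] at hps
    have hpartial : ∀ y : ℂ, p.partialSum (i + 1) y = p.coeff i * y ^ i := by
      intro y
      rw [FormalMultilinearSeries.partialSum]
      rw [Finset.sum_range_succ]
      have : ∀ m ∈ Finset.range i, (p m fun _ => y) = 0 := by
        intro m hm
        rw [FormalMultilinearSeries.apply_eq_pow_smul_coeff, IH m (Finset.mem_range.mp hm)
          (lt_trans (Finset.mem_range.mp hm) hiN), smul_zero]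
      rw [Finset.sum_eq_zero this, zero_add, FormalMultilinearSeries.apply_eq_pow_smul_coeff,
        smul_eq_mul]
      ring
    have hO2 : (fun y : ℂ => p.coeff i * y ^ i) =O[𝓝 0] fun y => y ^ (i + 1) := by
      have h1 : (fun y : ℂ => p.coeff i * y ^ i) =
          fun y => f y - (f y - p.partialSum (i + 1) y) := by
        funext y; rw [hpartial y]; ring
      rw [h1]
      have hf1 : f =O[𝓝 0] fun t : ℂ => t ^ (i + 1) := hO.trans (pow_isBigO_pow hiN)
      exact hf1.sub (hps.trans (norm_pow_bigO (i + 1)))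
    exact lemD hO2

lemma eventually_zero_of_flat {f : ℂ → ℂ} (hf : AnalyticAt ℂ f 0)
    (hO : ∀ N : ℕ, f =O[𝓝 0] fun t => t ^ N) : ∀ᶠ t in 𝓝 (0:ℂ), f t = 0 := by
  by_contra hcon
  have hne : analyticOrderAt f 0 ≠ ⊤ := fun h => hcon (analyticOrderAt_eq_top.mp h)
  obtain ⟨n, hn⟩ : ∃ n : ℕ, analyticOrderAt f 0 = n := by
    lift analyticOrderAt f 0 to ℕ using hne with n hn
    exact ⟨n, rfl⟩
  obtain ⟨g, hg, hg0, hev⟩ := (hf.analyticOrderAt_eq_natCast (n := n)).mp hn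
  rcases (hO (n + 1)).isBigOWith with ⟨C, hC⟩
  rw [isBigOWith_iff] at hC
  have h2 : ∀ᶠ t in 𝓝[≠] (0:ℂ), ‖g t‖ ≤ C * ‖t‖ := by
    filter_upwards [hC.filter_mono nhdsWithin_le_nhds, hev.filter_mono nhdsWithin_le_nhds,
      self_mem_nhdsWithin] with t ht hft ht0
    have hne' : t ≠ 0 := ht0
    have hkt : (0:ℝ) < ‖t‖ ^ n := by
      apply pow_pos; simpa [norm_pos_iff] using hne'
    rw [hft, sub_zero] at ht
    rw [norm_smul, norm_pow, norm_pow, pow_succ] at ht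
    have : ‖g t‖ * ‖t‖ ^ n ≤ C * ‖t‖ * ‖t‖ ^ n := by
      calc ‖g t‖ * ‖t‖ ^ n = ‖t‖ ^ n * ‖g t‖ := by ring
      _ ≤ C * (‖t‖ ^ n * ‖t‖) := ht
      _ = C * ‖t‖ * ‖t‖ ^ n := by ring
    exact le_of_mul_le_mul_right this hkt
  have htend : Tendsto g (𝓝[≠] (0:ℂ)) (𝓝 (g 0)) :=
    hg.continuousAt.continuousWithinAt
  have htend2 : Tendsto (fun t : ℂ => C * ‖t‖) (𝓝[≠] (0:ℂ)) (𝓝 (C * ‖(0:ℂ)‖)) :=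
    ((continuous_const.mul continuous_norm).tendsto _).mono_left nhdsWithin_le_nhds
  have hle : ‖g 0‖ ≤ C * ‖(0:ℂ)‖ :=
    le_of_tendsto_of_tendsto htend.norm htend2 h2
  simp only [norm_zero, mul_zero] at hle
  exact hg0 (norm_le_zero_iff.mp hle)

end Helpers

section BC

open Metric

lemma lemC {ψ : ℂ → ℂ} {N : ℕ} (hψ : AnalyticAt ℂ ψ 0) (hψ0 : ψ 0 = 0) (hN : 1 ≤ N)
    (hRe : (fun t => (ψ t).re) =O[𝓝 0] fun t : ℂ => t ^ N) :
    ψ =O[𝓝 0] fun t : ℂ => t ^ N := by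
  obtain ⟨R₀, hR₀, hdiff0⟩ : ∃ R₀ > 0, ∀ y ∈ ball (0:ℂ) R₀, DifferentiableAt ℂ ψ y := by
    have := hψ.eventually_analyticAt
    rw [Metric.eventually_nhds_iff] at this
    obtain ⟨ε, hε, h⟩ := this
    exact ⟨ε, hε, fun y hy => (h (by simpa [dist_eq_norm] using hy)).differentiableAt⟩
  rcases hRe.isBigOWith with ⟨C₀, hC₀⟩
  rw [isBigOWith_iff] at hC₀
  rw [Metric.eventually_nhds_iff] at hC₀
  obtain ⟨ε₀, hε₀, hbound⟩ := hC₀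
  set C : ℝ := max C₀ 1 with hC
  have hCpos : 0 < C := lt_of_lt_of_le one_pos (le_max_right _ _)
  have hbound' : ∀ t : ℂ, ‖t‖ < ε₀ → |(ψ t).re| ≤ C * ‖t‖ ^ N := by
    intro t ht
    have := hbound (y := t) (by simpa [dist_eq_norm] using ht)
    simp only [norm_pow] at this
    calc |(ψ t).re| = ‖(ψ t).re‖ := rfl
    _ ≤ C₀ * ‖t‖ ^ N := by simpa using this
    _ ≤ C * ‖t‖ ^ N := by
        apply mul_le_mul_of_nonneg_right (le_max_left _ _) (by positivity)
  set R₁ : ℝ := min R₀ ε₀ with hR₁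
  have hR₁pos : 0 < R₁ := lt_min hR₀ hε₀
  rw [isBigO_iff]
  refine ⟨C * 2 ^ (N + 1), ?_⟩
  rw [Metric.eventually_nhds_iff]
  refine ⟨R₁ / 2, by positivity, ?_⟩
  intro z hz
  rw [dist_zero_right] at hz
  rcases eq_or_ne z 0 with rfl | hz0
  · simp [hψ0, hN, zero_pow (by omega : N ≠ 0)]
  · set r : ℝ := 2 * ‖z‖ with hr
    have hnz : (0:ℝ) < ‖z‖ := norm_pos_iff.mpr hz0
    have hrpos : 0 < r := by rw [hr]; linarith
    have hrR₁ : r < R₁ := by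
      rw [hr]; linarith [hz]
    set A : ℝ := C * r ^ N with hA
    have hApos : 0 < A := by positivity
    set D : ℂ → ℂ := fun t => ((2 * A : ℝ) : ℂ) - ψ t with hD
    have hrepos : ∀ t ∈ ball (0:ℂ) r, (ψ t).re < A := by
      intro t ht
      rw [mem_ball, dist_zero_right] at ht
      rcases eq_or_ne t 0 with rfl | ht0
      · rw [hψ0]; simpa using hApos
      · have h1 : |(ψ t).re| ≤ C * ‖t‖ ^ N :=
          hbound' t (lt_of_lt_of_le (lt_of_lt_of_le ht hrR₁.le) (min_le_right _ _))
        have h2 : ‖t‖ ^ N < r ^ N := by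
          apply pow_lt_pow_left₀ ht (norm_nonneg t) (by omega)
        calc (ψ t).re ≤ |(ψ t).re| := le_abs_self _
        _ ≤ C * ‖t‖ ^ N := h1
        _ < C * r ^ N := by exact mul_lt_mul_of_pos_left h2 hCpos
    have hDne : ∀ t ∈ ball (0:ℂ) r, D t ≠ 0 := by
      intro t ht h0
      have : (D t).re = 0 := by rw [h0]; rfl
      rw [hD] at this
      simp only [Complex.sub_re, Complex.ofReal_re] at this
      have := hrepos t ht
      linarith
    have habs : ∀ t ∈ ball (0:ℂ) r, ‖ψ t‖ < ‖D t‖ := by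
      intro t ht
      have hre := hrepos t ht
      have hsq : Complex.normSq (ψ t) < Complex.normSq (D t) := by
        rw [hD]
        simp only [Complex.normSq_apply, Complex.sub_re, Complex.sub_im, Complex.ofReal_re,
          Complex.ofReal_im]
        nlinarith [hre, hApos, mul_self_nonneg ((ψ t).im)]
      have h1 : ‖ψ t‖ ^ 2 < ‖D t‖ ^ 2 := by
        rwa [Complex.sq_norm, Complex.sq_norm]
      exact lt_of_pow_lt_pow_left₀ 2 (norm_nonneg _) h1
    set ω : ℂ → ℂ := fun t => ψ t / D t with hω
    have hω0 : ω 0 = 0 := by simp [hω, hψ0]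
    have hωdiff : DifferentiableOn ℂ ω (ball (0:ℂ) r) := by
      apply DifferentiableOn.div
      · intro y hy
        exact (hdiff0 y (ball_subset_ball
          (le_trans hrR₁.le (min_le_left _ _)) hy)).differentiableWithinAt
      · apply DifferentiableOn.const_sub
        intro y hy
        exact (hdiff0 y (ball_subset_ball
          (le_trans hrR₁.le (min_le_left _ _)) hy)).differentiableWithinAt
      · exact hDne
    have hmaps : Set.MapsTo ω (ball (0:ℂ) r) (ball (ω 0) 1) := by
      intro t ht
      rw [hω0, mem_ball, dist_zero_right, hω]
      have h1 := habs t ht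
      have h2 : 0 < ‖D t‖ :=
        lt_of_le_of_lt (norm_nonneg _) h1
      rw [norm_div]
      exact (div_lt_one h2).mpr h1
    have hzball : z ∈ ball (0:ℂ) r := by
      rw [mem_ball, dist_zero_right, hr]
      linarith
    have hSch := Complex.dist_le_div_mul_dist_of_mapsTo_ball hωdiff (hmaps.mono_right ball_subset_closedBall) hzball
    rw [hω0, dist_zero_right, dist_zero_right] at hSch
    have hωz : ‖ω z‖ ≤ 1 / 2 := by
      calc ‖ω z‖ ≤ 1 / r * ‖z‖ := hSch
      _ = 1 / 2 := by
          rw [hr, div_mul_eq_mul_div, one_mul, mul_comm]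
          rw [mul_comm (2:ℝ) ‖z‖] at *
          rw [div_eq_iff (by linarith : ‖z‖ * 2 ≠ 0)]
          ring
    have heq : ψ z * (1 + ω z) = ((2 * A : ℝ) : ℂ) * ω z := by
      have h1 : ω z * D z = ψ z := div_mul_cancel₀ _ (hDne z hzball)
      rw [hD] at h1
      linear_combination -h1
    have h1ω : (1:ℝ) / 2 ≤ ‖1 + ω z‖ := by
      calc (1:ℝ) / 2 = 1 - 1/2 := by norm_num
      _ ≤ 1 - ‖ω z‖ := by linarith
      _ ≤ ‖1 + ω z‖ := by
          have h := norm_sub_le (1 + ω z) (ω z)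
          have h2 : (1 + ω z) - ω z = 1 := by ring
          rw [h2] at h
          simp only [norm_one] at h
          linarith
    have hfinal : ‖ψ z‖ ≤ 2 * A := by
      have h2 : ‖ψ z‖ * (1/2) ≤ ‖ψ z‖ * ‖1 + ω z‖ :=
        mul_le_mul_of_nonneg_left h1ω (norm_nonneg _)
      have h3 : ‖ψ z‖ * ‖1 + ω z‖ = ‖((2 * A : ℝ) : ℂ)‖ * ‖ω z‖ := by
        rw [← norm_mul, ← norm_mul, heq]
      have h4 : ‖((2 * A : ℝ) : ℂ)‖ = 2 * A := by
        rw [Complex.norm_real, Real.norm_eq_abs, abs_of_pos (by positivity)]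
      have h5 : ‖((2 * A : ℝ) : ℂ)‖ * ‖ω z‖ ≤ 2 * A * (1/2) := by
        rw [h4]
        exact mul_le_mul_of_nonneg_left hωz (by positivity)
      nlinarith
    calc ‖ψ z‖ ≤ 2 * A := hfinal
    _ = C * 2 ^ (N + 1) * ‖z‖ ^ N := by rw [hA, hr, mul_pow]; ring
    _ = C * 2 ^ (N + 1) * ‖z ^ N‖ := by rw [norm_pow]

end BC

section RootInv

lemma lemE {v : ℂ → ℂ} {n : ℕ} (hv : AnalyticAt ℂ v 0) (hv0 : v 0 ≠ 0) (hn : 1 ≤ n) :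
    ∃ w : ℂ → ℂ, AnalyticAt ℂ w 0 ∧ w 0 ≠ 0 ∧ ∀ᶠ t in 𝓝 (0:ℂ), (w t) ^ n = v t := by
  have hnC : (n : ℂ) ≠ 0 := Nat.cast_ne_zero.mpr (by omega)
  set a : ℂ := v 0 with ha
  set b : ℂ := Complex.exp (Complex.log a / n) with hb
  have hbn : b ^ n = a := by
    rw [hb, ← Complex.exp_nat_mul, mul_div_cancel₀ _ hnC]
    exact Complex.exp_log hv0
  refine ⟨fun t => b * Complex.exp (Complex.log (v t / a) / n), ?_, ?_, ?_⟩
  · apply AnalyticAt.mul analyticAt_const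
    apply AnalyticAt.comp analyticAt_cexp
    apply AnalyticAt.mul _ analyticAt_const
    apply AnalyticAt.comp (analyticAt_clog _) (hv.div analyticAt_const hv0)
    · simp only [Pi.div_apply, ha, div_self (show v 0 ≠ 0 from hv0)]
      exact Complex.one_mem_slitPlane
  · simp only [ha, div_self (show v 0 ≠ 0 from hv0), Complex.log_one, zero_div, Complex.exp_zero, mul_one]
    rw [hb]
    exact Complex.exp_ne_zero _
  · filter_upwards [hv.continuousAt.eventually_ne hv0] with t hvt
    rw [mul_pow, hbn, ← Complex.exp_nat_mul, mul_div_cancel₀ _ hnC,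
      Complex.exp_log (div_ne_zero hvt hv0)]
    field_simp

lemma lemF {u : ℂ → ℂ} (hu : AnalyticAt ℂ u 0) (hu0 : u 0 = 0) (hd : deriv u 0 ≠ 0) :
    ∃ w : ℂ → ℂ, AnalyticAt ℂ w 0 ∧ w 0 = 0 ∧ ∀ᶠ s in 𝓝 (0:ℂ), u (w s) = s := by
  have hstrict : HasStrictDerivAt u (deriv u 0) 0 := by
    have h1 : ContDiffAt ℂ 2 u 0 := (hu.contDiffAt).of_le le_top
    exact h1.hasStrictDerivAt (by norm_num)
  set e := hstrict.hasStrictFDerivAt_equiv hd with he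
  set Φ := e.toOpenPartialHomeomorph u with hΦ
  have hcoe : ⇑Φ = u := e.toOpenPartialHomeomorph_coe
  have hsource : (0:ℂ) ∈ Φ.source := e.mem_toOpenPartialHomeomorph_source
  have hΦ0 : Φ 0 = 0 := by rw [show Φ 0 = u 0 from congrFun hcoe 0, hu0]
  have htarget : (0:ℂ) ∈ Φ.target := by
    have := Φ.map_source hsource
    rwa [hΦ0] at this
  have hw0 : Φ.symm 0 = 0 := by
    have := Φ.left_inv hsource
    rwa [hΦ0] at this
  have hfd : fderiv ℂ u 0 = ↑((ContinuousLinearEquiv.unitsEquivAut ℂ) (Units.mk0 _ hd)) :=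
    e.hasFDerivAt.fderiv
  have han : AnalyticAt ℂ Φ.symm 0 := by
    have h2 : AnalyticAt ℂ (⇑Φ) 0 := by rw [hcoe]; exact hu
    have := Φ.analyticAt_symm' hsource h2 (by rw [hcoe]; exact hfd)
    rwa [hΦ0] at this
  refine ⟨Φ.symm, han, hw0, ?_⟩
  filter_upwards [Φ.open_target.mem_nhds htarget] with s hs
  rw [← hcoe]
  exact Φ.right_inv hs

lemma polySeries (c : ℕ → ℂ) (n N : ℕ) (hn : 1 ≤ n) :
    HasFPowerSeriesAt (fun s : ℂ => ∑ j ∈ Finset.range N, c j * s ^ (n*j))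
      (FormalMultilinearSeries.ofScalars ℂ
        (fun i => if i % n = 0 ∧ i / n < N then c (i/n) else 0)) 0 := by
  set d : ℕ → ℂ := fun i => if i % n = 0 ∧ i / n < N then c (i/n) else 0 with hd
  refine ⟨1, ?_, one_pos, ?_⟩
  · apply FormalMultilinearSeries.le_radius_of_bound _ (∑ j ∈ Finset.range N, ‖c j‖)
    intro i
    rw [FormalMultilinearSeries.ofScalars_norm]
    simp only [NNReal.coe_one, one_pow, mul_one]
    by_cases h : i % n = 0 ∧ i / n < N
    · rw [hd]
      simp only [h, and_self, if_true]
      exact Finset.single_le_sum (f := fun j => ‖c j‖) (fun j _ => norm_nonneg _)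
        (Finset.mem_range.mpr h.2)
    · rw [hd]; simp only [h, if_false, norm_zero]
      exact Finset.sum_nonneg fun j _ => norm_nonneg (c j)
  · intro y _
    simp only [zero_add]
    have h1 : ∀ i : ℕ, (FormalMultilinearSeries.ofScalars ℂ d) i (fun _ => y) = d i * y ^ i :=
      fun i => by rw [FormalMultilinearSeries.ofScalars_apply_eq, smul_eq_mul]
    rw [show (fun i => (FormalMultilinearSeries.ofScalars ℂ d) i (fun _ => y))
        = fun i => d i * y ^ i from funext h1]
    have hval : ∑ i ∈ (Finset.range N).image (fun j => n * j), d i * y ^ i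
        = ∑ j ∈ Finset.range N, c j * y ^ (n*j) := by
      rw [Finset.sum_image (fun a _ b _ h => by
        exact Nat.eq_of_mul_eq_mul_left (by omega) h)]
      apply Finset.sum_congr rfl
      intro j hj
      congr 1
      rw [hd]
      simp only [Nat.mul_mod_right, Nat.mul_div_cancel_left j (by omega : 0 < n),
        Finset.mem_range.mp hj, and_self, if_true]
    rw [← hval]
    apply hasSum_sum_of_ne_finset_zero
    intro i hi
    have : d i = 0 := by
      by_contra hne
      rw [hd] at hne
      by_cases h : i % n = 0 ∧ i / n < N
      · apply hi
        rw [Finset.mem_image]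
        exact ⟨i / n, Finset.mem_range.mpr h.2, Nat.mul_div_cancel' (Nat.dvd_of_mod_eq_zero h.1)⟩
      · exact hne (if_neg h)
    rw [this, zero_mul]

end RootInv


open scoped ENNReal NNReal

lemma easy_dir (F : ℂ → ℝ) (c : ℕ → ℂ) (hc0 : c 0 = 0)
    (hTaylor : ∀ N : ℕ,
      (fun z : ℂ => F z - ∑ j ∈ Finset.range N, 2 * (c j * z ^ j).re)
        =O[𝓝 0] fun z => z ^ N)
    {z : ℂ} (hz : z ≠ 0) (hsum : Summable fun j => c j * z ^ j) :
    ∃ γ : ℂ → ℂ × ℂ, AnalyticAt ℂ γ 0 ∧ γ 0 = 0 ∧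
        ¬ (∀ᶠ t in 𝓝 (0 : ℂ), γ t = 0) ∧ (∃ U ∈ 𝓝 (0 : ℂ), Set.InjOn γ U) ∧
        ∀ N : ℕ, (fun t => 2 * (γ t).2.re + F (γ t).1) =O[𝓝 0] fun t : ℂ => t ^ N := by
  set P := FormalMultilinearSeries.ofScalars ℂ c with hP
  -- bound on terms
  obtain ⟨B, hB⟩ : BddAbove (Set.range fun j => ‖c j * z ^ j‖) :=
    (hsum.tendsto_atTop_zero.norm.bddAbove_range)
  have hrad : (‖z‖₊ : ENNReal) ≤ P.radius := by
    apply P.le_radius_of_bound B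
    intro i
    rw [hP, FormalMultilinearSeries.ofScalars_norm]
    have : ‖c i‖ * ‖z‖ ^ i = ‖c i * z ^ i‖ := by rw [norm_mul, norm_pow]
    rw [show ((‖z‖₊ : NNReal) : ℝ) = ‖z‖ from rfl, this]
    exact hB (Set.mem_range_self i)
  have hradpos : 0 < P.radius := lt_of_lt_of_le (by simpa using hz) hrad
  set s := P.sum with hs
  have hball : HasFPowerSeriesOnBall s P 0 P.radius := P.hasFPowerSeriesOnBall hradpos
  have hAt : HasFPowerSeriesAt s P 0 := hball.hasFPowerSeriesAt
  have hs0 : s 0 = 0 := by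
    have h1 := hball.coeff_zero (fun _ => 0)
    have h2 : P 0 (fun _ => 0) = c 0 := by
      rw [hP, FormalMultilinearSeries.ofScalars_apply_eq]
      simp
    rw [h2, hc0] at h1
    simpa using h1.symm
  refine ⟨fun t => (t, -s t), ?_, ?_, ?_, ?_, ?_⟩
  · exact analyticAt_id.prod hAt.analyticAt.neg
  · simp [hs0]
  · intro hev
    have h1 : ∀ᶠ t in 𝓝[≠] (0:ℂ), t = 0 ∧ t ≠ 0 := by
      apply Filter.Eventually.and
      · filter_upwards [hev.filter_mono nhdsWithin_le_nhds] with t ht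
        exact congrArg Prod.fst ht
      · exact self_mem_nhdsWithin
    obtain ⟨t, ht1, ht2⟩ := h1.exists
    exact ht2 ht1
  · exact ⟨Set.univ, Filter.univ_mem, fun a _ b _ hab => congrArg Prod.fst hab⟩
  · intro N
    have hTay := hTaylor N
    have hpartial : ∀ y : ℂ, P.partialSum N y = ∑ j ∈ Finset.range N, c j * y ^ j := by
      intro y
      rw [FormalMultilinearSeries.partialSum]
      apply Finset.sum_congr rfl
      intro j _
      rw [hP, FormalMultilinearSeries.ofScalars_apply_eq, smul_eq_mul]
    have hrem : (fun y : ℂ => s y - ∑ j ∈ Finset.range N, c j * y ^ j)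
        =O[𝓝 0] fun y => y ^ N := by
      have h1 := hAt.isBigO_sub_partialSum_pow N
      simp only [zero_add] at h1
      have h2 : (fun y : ℂ => s y - ∑ j ∈ Finset.range N, c j * y ^ j)
          = fun y => s y - P.partialSum N y := by
        funext y; rw [hpartial y]
      rw [h2]
      exact h1.trans (norm_pow_bigO N)
    have hre : (fun t : ℂ => (∑ j ∈ Finset.range N, 2 * (c j * t ^ j).re) - 2 * (s t).re)
        =O[𝓝 0] fun t => t ^ N := by
      have h1 : (fun t : ℂ => (∑ j ∈ Finset.range N, 2 * (c j * t ^ j).re) - 2 * (s t).re)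
          =O[𝓝 0] fun t => s t - ∑ j ∈ Finset.range N, c j * t ^ j := by
        apply IsBigO.of_bound 2
        filter_upwards with t
        have h2 : (∑ j ∈ Finset.range N, 2 * (c j * t ^ j).re) - 2 * (s t).re
            = -(2 * ((s t - ∑ j ∈ Finset.range N, c j * t ^ j).re)) := by
          rw [Complex.sub_re, Complex.re_sum, ← Finset.mul_sum]
          ring
        rw [h2]
        rw [norm_neg]
        calc ‖2 * (s t - ∑ j ∈ Finset.range N, c j * t ^ j).re‖
            = 2 * |(s t - ∑ j ∈ Finset.range N, c j * t ^ j).re| := by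
              rw [norm_mul]; simp [Real.norm_eq_abs]
        _ ≤ 2 * ‖s t - ∑ j ∈ Finset.range N, c j * t ^ j‖ :=
              mul_le_mul_of_nonneg_left (Complex.abs_re_le_norm _) (by norm_num)
      exact h1.trans hrem
    have hfinal := hTay.add hre
    have heq : (fun t : ℂ => (F t - ∑ j ∈ Finset.range N, 2 * (c j * t ^ j).re)
        + ((∑ j ∈ Finset.range N, 2 * (c j * t ^ j).re) - 2 * (s t).re))
        = fun t : ℂ => 2 * ((fun t : ℂ => (t, -s t)) t).2.re + F ((fun t : ℂ => (t, -s t)) t).1 := by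
      funext t
      simp only [Complex.neg_re]
      ring
    rw [heq] at hfinal
    exact hfinal


lemma hard_dir (F : ℂ → ℝ) (c : ℕ → ℂ) (hc0 : c 0 = 0)
    (hTaylor : ∀ N : ℕ,
      (fun z : ℂ => F z - ∑ j ∈ Finset.range N, 2 * (c j * z ^ j).re)
        =O[𝓝 0] fun z => z ^ N)
    (γ : ℂ → ℂ × ℂ) (hγan : AnalyticAt ℂ γ 0) (hγ0 : γ 0 = 0)
    (hγne : ¬ ∀ᶠ t in 𝓝 (0:ℂ), γ t = 0)
    (htan : ∀ N : ℕ, (fun t => 2 * (γ t).2.re + F (γ t).1) =O[𝓝 0] fun t : ℂ => t ^ N) :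
    ∃ z : ℂ, z ≠ 0 ∧ Summable fun j => c j * z ^ j := by
  set g : ℂ → ℂ := fun t => (γ t).1 with hgdef
  set h : ℂ → ℂ := fun t => (γ t).2 with hhdef
  have hgan : AnalyticAt ℂ g 0 := ((ContinuousLinearMap.fst ℂ ℂ ℂ).analyticAt (γ 0)).comp hγan
  have hhan : AnalyticAt ℂ h 0 := ((ContinuousLinearMap.snd ℂ ℂ ℂ).analyticAt (γ 0)).comp hγan
  have hg0 : g 0 = 0 := by rw [hgdef]; simp [hγ0]
  have hh0 : h 0 = 0 := by rw [hhdef]; simp [hγ0]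
  -- the auxiliary holomorphic functions
  set P : ℕ → ℂ → ℂ := fun N t => h t + ∑ j ∈ Finset.range N, c j * (g t) ^ j with hPdef
  have hPan : ∀ N, AnalyticAt ℂ (P N) 0 := by
    intro N
    apply hhan.add
    apply Finset.analyticAt_fun_sum
    intro j _
    exact analyticAt_const.mul (hgan.pow j)
  have hP0 : ∀ N, 1 ≤ N → P N 0 = 0 := by
    intro N hN
    rw [hPdef]
    simp only [hh0, hg0, zero_add]
    rw [Finset.sum_eq_single 0]
    · simp [hc0]
    · intro j _ hj
      rw [zero_pow hj, mul_zero]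
    · intro habs
      exact absurd (Finset.mem_range.mpr (by omega)) habs
  have hgtend : Filter.Tendsto g (𝓝 0) (𝓝 0) := by
    have := hgan.continuousAt.tendsto
    rwa [hg0] at this
  have hgO : g =O[𝓝 0] fun t : ℂ => t := by
    have := hgan.differentiableAt.isBigO_sub (x₀ := 0)
    simpa [hg0] using this
  have hPflat : ∀ N, 1 ≤ N → (P N) =O[𝓝 0] fun t : ℂ => t ^ N := by
    intro N hN
    apply lemC (hPan N) (hP0 N hN) hN
    have hA := htan N
    have hB : (fun t => F (g t) - ∑ j ∈ Finset.range N, 2 * (c j * (g t) ^ j).re)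
        =O[𝓝 0] fun t => (g t) ^ N := (hTaylor N).comp_tendsto hgtend
    have hB' : (fun t => F (g t) - ∑ j ∈ Finset.range N, 2 * (c j * (g t) ^ j).re)
        =O[𝓝 0] fun t : ℂ => t ^ N := hB.trans (hgO.pow N)
    have hsub := hA.sub hB'
    have heq : (fun t => (2 * (γ t).2.re + F (γ t).1)
        - (F (g t) - ∑ j ∈ Finset.range N, 2 * (c j * (g t) ^ j).re))
        = fun t => 2 * ((P N) t).re := by
      funext t
      rw [hPdef]
      simp only [Complex.add_re, Complex.re_sum]
      rw [← Finset.mul_sum]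
      rw [hgdef, hhdef]
      ring
    rw [heq] at hsub
    have : (fun t => ((P N) t).re) = fun t => (1/2 : ℝ) * (2 * ((P N) t).re) := by
      funext t; ring
    rw [this]
    exact hsub.const_mul_left _
  by_cases hgz : ∀ᶠ t in 𝓝 (0:ℂ), g t = 0
  · exfalso
    have hsumzero : ∀ᶠ t in 𝓝 (0:ℂ), ∀ N, P N t = h t := by
      filter_upwards [hgz] with t h1
      intro N
      rw [hPdef]
      simp only [h1]
      rw [Finset.sum_eq_single 0]
      · simp [hc0]
      · intro j _ hj
        rw [zero_pow hj, mul_zero]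
      · intro _
        simp [hc0]
    have hhflat : ∀ N : ℕ, h =O[𝓝 0] fun t : ℂ => t ^ N := by
      intro N
      have h1 : (P (N+1)) =O[𝓝 0] fun t : ℂ => t ^ N :=
        (hPflat (N+1) (by omega)).trans (pow_isBigO_pow (by omega))
      apply h1.congr' ?_ (EventuallyEq.refl _ _)
      filter_upwards [hsumzero] with t ht
      exact ht (N+1)
    have hzero := eventually_zero_of_flat hhan hhflat
    apply hγne
    filter_upwards [hgz, hzero] with t h1 h2
    rw [Prod.ext_iff]
    exact ⟨h1, h2⟩
  · obtain ⟨n, hn⟩ : ∃ n : ℕ, analyticOrderAt g 0 = n := by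
      have hne : analyticOrderAt g 0 ≠ ⊤ := fun hcon => hgz (analyticOrderAt_eq_top.mp hcon)
      lift analyticOrderAt g 0 to ℕ using hne with n hn
      exact ⟨n, rfl⟩
    obtain ⟨v, hvan, hv0, hrep⟩ := (hgan.analyticOrderAt_eq_natCast (n := n)).mp hn
    simp only [sub_zero] at hrep
    have hn1 : 1 ≤ n := by
      by_contra hcon
      have h0 := hrep.self_of_nhds
      rw [show n = 0 by omega] at h0
      simp only [pow_zero, one_smul] at h0
      rw [hg0] at h0
      exact hv0 h0.symm
    obtain ⟨w₀, hw₀an, hw₀0, hw₀pow⟩ := lemE hvan hv0 hn1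
    set u : ℂ → ℂ := fun t => t * w₀ t with hudef
    have huan : AnalyticAt ℂ u 0 := analyticAt_id.mul hw₀an
    have hu0 : u 0 = 0 := by rw [hudef]; simp
    have hud : HasDerivAt u (w₀ 0) 0 := by
      have h1 := (hasDerivAt_id (0:ℂ)).fun_mul hw₀an.differentiableAt.hasDerivAt
      simpa using h1
    have hderiv : deriv u 0 ≠ 0 := by rw [hud.deriv]; exact hw₀0
    have hgu : ∀ᶠ t in 𝓝 (0:ℂ), g t = (u t) ^ n := by
      filter_upwards [hrep, hw₀pow] with t h1 h2
      rw [h1, smul_eq_mul, hudef]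
      simp only [mul_pow]
      rw [h2]
    obtain ⟨w, hwan, hw00, hwright⟩ := lemF huan hu0 hderiv
    have hwtend : Filter.Tendsto w (𝓝 0) (𝓝 0) := by
      have := hwan.continuousAt.tendsto
      rwa [hw00] at this
    have hwO : w =O[𝓝 0] fun s : ℂ => s := by
      simpa [hw00] using hwan.differentiableAt.isBigO_sub (x₀ := 0)
    set T : ℂ → ℂ := fun s => h (w s) with hTdef
    have hTan : AnalyticAt ℂ T 0 := by
      have h1 : AnalyticAt ℂ h (w 0) := by rwa [hw00]
      exact h1.comp hwan
    obtain ⟨p, hp⟩ := hTan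
    have hTflat : ∀ N, 1 ≤ N →
        (fun s => T s + ∑ j ∈ Finset.range N, c j * s ^ (n*j)) =O[𝓝 0] fun s : ℂ => s ^ N := by
      intro N hN
      have h1 : (fun s => P N (w s)) =O[𝓝 0] fun s => (w s) ^ N :=
        (hPflat N hN).comp_tendsto hwtend
      have h2 : (fun s => P N (w s)) =O[𝓝 0] fun s : ℂ => s ^ N := h1.trans (hwO.pow N)
      apply h2.congr' ?_ (EventuallyEq.refl _ _)
      filter_upwards [hwtend.eventually hgu, hwright] with s h3 h4
      rw [hPdef]
      simp only
      rw [h4] at h3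
      rw [h3, hTdef]
      congr 1
      apply Finset.sum_congr rfl
      intro j _
      rw [← pow_mul]
    have hcoeff : ∀ j : ℕ, p.coeff (n * j) = -(c j) := by
      intro j
      set k := n * j with hk
      set d : ℕ → ℂ := fun i => if i % n = 0 ∧ i / n < k + 1 then c (i/n) else 0 with hd
      have hq := polySeries c n (k+1) hn1
      have hsum : HasFPowerSeriesAt
          (fun s => T s + ∑ i ∈ Finset.range (k+1), c i * s ^ (n*i))
          (p + FormalMultilinearSeries.ofScalars ℂ d) 0 := by
        have := hp.add hq
        exact this
      have hvan := lemB hsum (hTflat (k+1) (by omega)) k (by omega)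
      have hadd : (p + FormalMultilinearSeries.ofScalars ℂ d).coeff k
          = p.coeff k + (FormalMultilinearSeries.ofScalars ℂ d).coeff k := rfl
      have hqco : (FormalMultilinearSeries.ofScalars ℂ d).coeff k = c j := by
        rw [FormalMultilinearSeries.coeff]
        rw [show (1 : Fin k → ℂ) = fun _ => (1:ℂ) from rfl]
        rw [FormalMultilinearSeries.ofScalars_apply_eq]
        rw [hd]
        simp only [hk, Nat.mul_mod_right, Nat.mul_div_cancel_left j (by omega : 0 < n),
          true_and, one_pow, smul_eq_mul, mul_one]
        rw [if_pos (by nlinarith [hn1] : j < n * j + 1)]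
      rw [hadd, hqco] at hvan
      linear_combination hvan
    -- summability
    obtain ⟨r, hr0, hrlt⟩ := ENNReal.lt_iff_exists_nnreal_btwn.mp hp.radius_pos
    have hr0' : (0:ℝ) < (r:ℝ) := by
      have : (0:ℝ≥0∞) < (r:ℝ≥0∞) := hr0
      exact_mod_cast this
    have hsumnorm := p.summable_norm_mul_pow hrlt
    have hcomp : Summable fun j : ℕ => ‖p (n*j)‖ * (r:ℝ)^(n*j) := by
      apply hsumnorm.comp_injective
      intro a b hab
      simpa using (Nat.eq_of_mul_eq_mul_left (by omega : 0 < n) hab)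
    set rr : ℝ := (r : ℝ) with hrr
    set zr : ℂ := (rr : ℂ) with hzr
    refine ⟨zr^n, ?_, ?_⟩
    · apply pow_ne_zero
      rw [hzr]
      simp only [ne_eq, Complex.ofReal_eq_zero]
      linarith
    · apply Summable.of_norm
      have heq : (fun j => ‖c j * (zr^n) ^ j‖)
          = fun j : ℕ => ‖p (n*j)‖ * rr^(n*j) := by
        funext j
        rw [norm_mul, norm_pow, norm_pow, hzr]
        rw [Complex.norm_real, Real.norm_eq_abs, abs_of_pos hr0']
        rw [← pow_mul]
        congr 1
        rw [FormalMultilinearSeries.norm_apply_eq_norm_coef, hcoeff j, norm_neg]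
      rw [heq]
      exact hcomp


/-- Let `M ⊆ ℂ²` be defined by `2 Re w + F(z,z̄) = 0` with
`Δ₁(M,0) = ∞` and associated formal series `S(z) = ∑_{j≥2} c_j z^j` from the pure-terms
Taylor expansion of `F`.  Then: there is no nonconstant holomorphic curve (with good,
i.e. injective, parametrization) tangent to `M` at `0` to infinite order if and only if
the radius of convergence of `S` equals `0`. -/
theorem statement8 (F : ℂ → ℝ)
    (hF : ContDiff ℝ (⊤ : ℕ∞) F) (hF0 : F 0 = 0) (hdF : fderiv ℝ F 0 = 0)
    (hΔ : DAngeloTypeInfinite (fun q : ℂ × ℂ => 2 * q.2.re + F q.1) 0)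
    (c : ℕ → ℂ) (hc0 : c 0 = 0) (hc1 : c 1 = 0)
    (hTaylor : ∀ N : ℕ,
      (fun z : ℂ => F z - ∑ j ∈ Finset.range N, 2 * (c j * z ^ j).re)
        =O[𝓝 0] fun z => z ^ N) :
    (¬ ∃ γ : ℂ → ℂ × ℂ, AnalyticAt ℂ γ 0 ∧ γ 0 = 0 ∧
        ¬ (∀ᶠ t in 𝓝 (0 : ℂ), γ t = 0) ∧ (∃ U ∈ 𝓝 (0 : ℂ), Set.InjOn γ U) ∧
        ∀ N : ℕ, (fun t => 2 * (γ t).2.re + F (γ t).1) =O[𝓝 0] fun t : ℂ => t ^ N)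
      ↔ ∀ z : ℂ, z ≠ 0 → ¬ Summable fun j => c j * z ^ j := by
  constructor
  · intro hno z hz hsum
    exact hno (easy_dir F c hc0 hTaylor hz hsum)
  · rintro hrad ⟨γ, hγan, hγ0, hγne, -, htan⟩
    obtain ⟨z, hz, hsum⟩ := hard_dir F c hc0 hTaylor γ hγan hγ0 hγne htan
    exact hrad z hz hsum
end
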